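/- Akin's lemma: Let player a use a time-independent memory-one strategy T_a in an infinitely repeated game on finite state space A², and let P* be the Cesàro limit distribution P*(σ) = lim_{T→∞} (1/T) Σ_{t=1}^T P_t(σ) (assumed to exist). Then Σ_{σ'} P*(σ') [T_a(σ_a|σ') - δ_{σ_a, σ'_a}] = 0 for all σ_a ∈ A. -/
import Mathlib


/-- Akin's lemma: if player 1 uses a time-independent memory-one strategy `T1` and the
Cesàro limit distribution `P*` exists, then `∑ σ' P*(σ') (T1(σa|σ') - δ_{σa,σ'₁}) = 0`. -/
theorem stmt7 {M : ℕ} (T1 : Fin M → Fin M × Fin M → ℝ)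
    (P : ℕ → Fin M × Fin M → ℝ) (Pstar : Fin M × Fin M → ℝ)
    (hprob : ∀ t σ, 0 ≤ P t σ)
    (hnorm : ∀ t, ∑ σ : Fin M × Fin M, P t σ = 1)
    (hstep : ∀ t, ∀ σa : Fin M,
      (∑ σ : Fin M × Fin M, if σ.1 = σa then P (t + 1) σ else 0)
        = ∑ σ' : Fin M × Fin M, T1 σa σ' * P t σ')
    (hconv : ∀ σ : Fin M × Fin M,
      Filter.Tendsto (fun T : ℕ => (∑ t ∈ Finset.range T, P (t + 1) σ) / T)
        Filter.atTop (nhds (Pstar σ))) :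
    ∀ σa : Fin M,
      ∑ σ' : Fin M × Fin M, Pstar σ' * (T1 σa σ' - if σa = σ'.1 then 1 else 0) = 0 := by
  intro σa
  set g : ℕ → ℝ := fun s => ∑ σ : Fin M × Fin M, if σ.1 = σa then P s σ else 0 with hg
  have hg0 : ∀ s, 0 ≤ g s := by
    intro s
    apply Finset.sum_nonneg
    intro σ _
    split <;> [skip; exact le_rfl] ; exact hprob s σ
  have hg1 : ∀ s, g s ≤ 1 := by
    intro s
    rw [← hnorm s]
    apply Finset.sum_le_sum
    intro σ _
    split <;> [exact le_rfl; skip] ; exact hprob s σ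
  set F : ℕ → ℝ := fun T =>
    (∑ t ∈ Finset.range T, ∑ σ' : Fin M × Fin M,
      P (t + 1) σ' * (T1 σa σ' - if σa = σ'.1 then 1 else 0)) / T with hF
  -- F tends to the target sum
  have h1 : Filter.Tendsto F Filter.atTop
      (nhds (∑ σ' : Fin M × Fin M, Pstar σ' * (T1 σa σ' - if σa = σ'.1 then 1 else 0))) := by
    have : F = fun T : ℕ => ∑ σ' : Fin M × Fin M,
        ((∑ t ∈ Finset.range T, P (t + 1) σ') / T) * (T1 σa σ' - if σa = σ'.1 then 1 else 0) := by
      funext T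
      rw [hF]
      dsimp only
      rw [Finset.sum_comm]
      rw [Finset.sum_div]
      congr 1
      funext σ'
      rw [← Finset.sum_mul]
      ring
    rw [this]
    exact tendsto_finset_sum _ fun σ' _ => (hconv σ').mul_const _
  -- F tends to 0 by telescoping
  have h2 : Filter.Tendsto F Filter.atTop (nhds 0) := by
    have key : ∀ t : ℕ, (∑ σ' : Fin M × Fin M,
        P (t + 1) σ' * (T1 σa σ' - if σa = σ'.1 then 1 else 0)) = g (t + 2) - g (t + 1) := by
      intro t
      have e1 : (∑ σ' : Fin M × Fin M, P (t + 1) σ' * T1 σa σ') = g (t + 2) := by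
        show _ = ∑ σ : Fin M × Fin M, if σ.1 = σa then P (t + 1 + 1) σ else 0
        rw [hstep (t + 1) σa]
        exact Finset.sum_congr rfl fun σ' _ => mul_comm _ _
      have e2 : (∑ σ' : Fin M × Fin M,
          P (t + 1) σ' * (if σa = σ'.1 then 1 else 0)) = g (t + 1) := by
        show _ = ∑ σ : Fin M × Fin M, if σ.1 = σa then P (t + 1) σ else 0
        refine Finset.sum_congr rfl fun σ' _ => ?_
        by_cases h : σ'.1 = σa
        · simp [h, eq_comm]
        · have h' : ¬ σa = σ'.1 := fun hh => h hh.symm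
          simp [h, h']
      calc (∑ σ' : Fin M × Fin M, P (t + 1) σ' * (T1 σa σ' - if σa = σ'.1 then 1 else 0))
          = (∑ σ' : Fin M × Fin M, P (t + 1) σ' * T1 σa σ')
            - ∑ σ' : Fin M × Fin M, P (t + 1) σ' * (if σa = σ'.1 then 1 else 0) := by
            rw [← Finset.sum_sub_distrib]
            exact Finset.sum_congr rfl fun σ' _ => mul_sub _ _ _
        _ = g (t + 2) - g (t + 1) := by rw [e1, e2]
    have hFeq : ∀ T : ℕ, F T = (g (T + 1) - g 1) / T := by
      intro T
      rw [hF]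
      dsimp only
      congr 1
      calc (∑ t ∈ Finset.range T, ∑ σ' : Fin M × Fin M,
              P (t + 1) σ' * (T1 σa σ' - if σa = σ'.1 then 1 else 0))
          = ∑ t ∈ Finset.range T, (g (t + 1 + 1) - g (t + 1)) :=
            Finset.sum_congr rfl fun t _ => key t
        _ = g (T + 1) - g 1 := Finset.sum_range_sub (fun t => g (t + 1)) T
    have hbound : ∀ T : ℕ, |F T| ≤ 2 / T := by
      intro T
      rcases Nat.eq_zero_or_pos T with h | h
      · simp [hFeq, h]
      · have hT : (0 : ℝ) < T := by exact_mod_cast h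
        rw [hFeq, abs_div, abs_of_pos hT, div_le_div_iff_of_pos_right hT]
        calc |g (T + 1) - g 1| ≤ |g (T + 1)| + |g 1| := abs_sub _ _
          _ ≤ 1 + 1 := by
              gcongr <;> rw [abs_of_nonneg (hg0 _)] <;> [exact hg1 _; exact hg1 _]
          _ = 2 := by norm_num
    have hlim : Filter.Tendsto (fun T : ℕ => 2 / (T : ℝ)) Filter.atTop (nhds 0) :=
      tendsto_const_div_atTop_nhds_zero_nat 2
    exact squeeze_zero_norm hbound hlim
  exact tendsto_nhds_unique h1 h2
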